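/- Let σ be a nondecreasing sigmoidal function satisfying (Σ1)–(Σ4) with parameters m ≥ 2 and β > m + 1, let a < b be integers, and let δ > 0 with a + δ < b − δ. Then for each s = 1, …, m and for all n ∈ ℕ⁺ with nδ ≥ K_s + 1, one has |m^n_0(φ_σ^{(s)}, nx)| ≤ (C_s/2)[(nδ+1)^{−β−1} + 2(nδ)^{−β−1} + (nδ−1)^{−β−1}] for every x ∈ I_δ := [a+δ, b−δ]; in particular m^n_0(φ_σ^{(s)}, nx) = O(n^{−β−1}) as n → +∞, uniformly with respect to x ∈ I_δ. -/

import Mathlib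

open Filter Topology MeasureTheory

/-- The density (kernel) function generated by a sigmoidal function. -/
noncomputable def phiFn (σ : ℝ → ℝ) (x : ℝ) : ℝ := (σ (x + 1) - σ (x - 1)) / 2

/-- σ is a (measurable) sigmoidal function. -/
def Sigmoidal (σ : ℝ → ℝ) : Prop :=
  Measurable σ ∧ Tendsto σ atBot (𝓝 0) ∧ Tendsto σ atTop (𝓝 1)

/-- (Σ1): σ(x) - 1/2 is an odd function. -/
def Sigma1 (σ : ℝ → ℝ) : Prop := ∀ x : ℝ, σ (-x) - 1/2 = -(σ x - 1/2)

/-- (Σ2): σ ∈ C²(ℝ) and σ is concave on [0, +∞). -/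
def Sigma2 (σ : ℝ → ℝ) : Prop := ContDiff ℝ 2 σ ∧ ConcaveOn ℝ (Set.Ici 0) σ

/-- (Σ3): σ(x) = O(|x|^{-α-1}) as x → -∞, with α > 0. -/
def Sigma3 (σ : ℝ → ℝ) (α : ℝ) : Prop :=
  0 < α ∧ σ =O[atBot] fun x : ℝ => |x| ^ (-α - 1)

/-- (Σ4): σ ∈ C^m(ℝ), m ≥ 2, and for each s = 1,…,m there are constants
`K s, C s > 0` with |σ^{(s)}(x)| ≤ C s * |x|^{-β-1} for |x| ≥ K s, where β > m + 1. -/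
def Sigma4 (σ : ℝ → ℝ) (m : ℕ) (β : ℝ) (K C : ℕ → ℝ) : Prop :=
  2 ≤ m ∧ (m : ℝ) + 1 < β ∧ ContDiff ℝ m σ ∧
    ∀ s : ℕ, 1 ≤ s → s ≤ m → 0 < K s ∧ 0 < C s ∧
      ∀ x : ℝ, K s ≤ |x| → |iteratedDeriv s σ x| ≤ C s * |x| ^ (-β - 1)

/-- Algebraic moment of order ν of Φ. -/
noncomputable def algMoment (Φ : ℝ → ℝ) (ν : ℕ) (x : ℝ) : ℝ :=
  ∑' k : ℤ, Φ (x - (k : ℝ)) * ((k : ℝ) - x) ^ ν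

/-- (Σ5): the algebraic moments of order j = 1,…,m of φ_σ are constants A j. -/
def Sigma5 (σ : ℝ → ℝ) (m : ℕ) (A : ℕ → ℝ) : Prop :=
  ∀ j : ℕ, 1 ≤ j → j ≤ m → ∀ x : ℝ, algMoment (phiFn σ) j x = A j

/-- Truncated algebraic moment of order ν of Φ (associated with integers a < b). -/
noncomputable def truncMoment (Φ : ℝ → ℝ) (ν : ℕ) (a b : ℤ) (n : ℕ) (u : ℝ) : ℝ :=
  ∑ k ∈ Finset.Icc ((n : ℤ) * a) ((n : ℤ) * b), Φ (u - (k : ℝ)) * ((k : ℝ) - u) ^ ν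

/-- The ν-th discrete absolute moment function of Φ (before taking sup over u). -/
noncomputable def discMoment (Φ : ℝ → ℝ) (ν : ℝ) (u : ℝ) : ℝ :=
  ∑' k : ℤ, |Φ (u - (k : ℝ))| * |u - (k : ℝ)| ^ ν

/-- The Riemann zeta function (as a real series), ζ(p) = ∑_{i≥1} i^{-p}. -/
noncomputable def zetaR (p : ℝ) : ℝ := ∑' i : ℕ, ((i : ℝ) + 1) ^ (-p)

/-- The NN operator F_n activated by σ. -/
noncomputable def Fop (σ : ℝ → ℝ) (f : ℝ → ℝ) (a b : ℝ) (n : ℕ) (x : ℝ) : ℝ :=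
  (∑ k ∈ Finset.Icc ⌈(n : ℝ) * a⌉ ⌊(n : ℝ) * b⌋, f ((k : ℝ) / n) * phiFn σ ((n : ℝ) * x - k)) /
    (∑ k ∈ Finset.Icc ⌈(n : ℝ) * a⌉ ⌊(n : ℝ) * b⌋, phiFn σ ((n : ℝ) * x - k))

/-- The modified NN operator F̃_n (integer endpoints a < b). -/
noncomputable def Ftil (σ : ℝ → ℝ) (f : ℝ → ℝ) (a b : ℤ) (n : ℕ) (x : ℝ) : ℝ :=
  ∑ k ∈ Finset.Icc ((n : ℤ) * a) ((n : ℤ) * b), f ((k : ℝ) / n) * phiFn σ ((n : ℝ) * x - (k : ℝ))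

/-- Sup-norm of g on [a,b]. -/
noncomputable def supNormOn (g : ℝ → ℝ) (a b : ℝ) : ℝ := ⨆ x : Set.Icc a b, |g x|

/-- Modulus of continuity of g on [a,b]. -/
noncomputable def modulus (g : ℝ → ℝ) (a b h : ℝ) : ℝ :=
  sSup {y : ℝ | ∃ u ∈ Set.Icc a b, ∃ v ∈ Set.Icc a b, |u - v| ≤ h ∧ y = |g u - g v|}

/-- Discrete absolute moment (natural order ν) of Φ: sup over u of the moment series. -/
noncomputable def dmomentN (Φ : ℝ → ℝ) (ν : ℕ) : ℝ :=
  ⨆ u : ℝ, ∑' k : ℤ, |Φ (u - (k : ℝ))| * |u - (k : ℝ)| ^ ν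


lemma iteratedDeriv_phiFn {σ : ℝ → ℝ} {m : ℕ} (hσ : ContDiff ℝ m σ) {s : ℕ} (hsm : s ≤ m) (x : ℝ) :
    iteratedDeriv s (phiFn σ) x
      = (iteratedDeriv s σ (x + 1) - iteratedDeriv s σ (x - 1)) / 2 := by
  have hσs : ContDiff ℝ s σ := hσ.of_le (by exact_mod_cast hsm)
  set f : ℝ → ℝ := fun y => σ (y + 1) with hf
  set g : ℝ → ℝ := fun y => σ (y + (-1)) with hg
  have hfc : ContDiff ℝ s f := hσs.comp (contDiff_id.add contDiff_const)
  have hgc : ContDiff ℝ s g := hσs.comp (contDiff_id.add contDiff_const)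
  have h1 : phiFn σ = fun y => (2:ℝ)⁻¹ * (f y - g y) := by
    funext y
    simp only [phiFn, f, g]
    rw [sub_eq_add_neg y 1]
    ring
  rw [h1, ← iteratedDerivWithin_univ,
    iteratedDerivWithin_const_mul (Set.mem_univ x) uniqueDiffOn_univ (2:ℝ)⁻¹
      ((hfc.sub hgc).contDiffWithinAt), show (fun y => f y - g y) = f - g from rfl,
    iteratedDerivWithin_sub (Set.mem_univ x) uniqueDiffOn_univ hfc.contDiffWithinAt hgc.contDiffWithinAt,
    iteratedDerivWithin_univ, iteratedDerivWithin_univ]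
  have e1 : iteratedDeriv s f x = iteratedDeriv s σ (x + 1) := by
    rw [hf, iteratedDeriv_comp_add_const]
  have e2 : iteratedDeriv s g x = iteratedDeriv s σ (x - 1) := by
    rw [hg, iteratedDeriv_comp_add_const, sub_eq_add_neg]
  rw [e1, e2]
  ring

lemma telescope_sum (h : ℤ → ℝ) (A B : ℤ) (hAB : A + 1 ≤ B) :
    ∑ k ∈ Finset.Icc A B, (h (k - 1) - h (k + 1))
      = h (A - 1) + h A - h B - h (B + 1) := by
  rw [Finset.sum_sub_distrib]
  have e1 : ∑ k ∈ Finset.Icc A B, h (k - 1) = ∑ j ∈ Finset.Icc (A - 1) (B - 1), h j := by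
    have := Finset.map_add_right_Icc (A - 1) (B - 1) 1
    simp only [sub_add_cancel] at this
    rw [← this, Finset.sum_map]
    simp
  have e2 : ∑ k ∈ Finset.Icc A B, h (k + 1) = ∑ j ∈ Finset.Icc (A + 1) (B + 1), h j := by
    rw [← Finset.map_add_right_Icc A B 1, Finset.sum_map]
    simp
  rw [e1, e2]
  have s1 : Finset.Icc (A - 1) (B - 1)
      = insert (A - 1) (insert A (Finset.Icc (A + 1) (B - 1))) := by
    ext k; simp only [Finset.mem_Icc, Finset.mem_insert]; omega
  have s2 : Finset.Icc (A + 1) (B + 1)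
      = insert (B + 1) (insert B (Finset.Icc (A + 1) (B - 1))) := by
    ext k; simp only [Finset.mem_Icc, Finset.mem_insert]; omega
  rw [s1, s2, Finset.sum_insert (by simp only [Finset.mem_insert, Finset.mem_Icc]; omega),
    Finset.sum_insert (by simp only [Finset.mem_Icc]; omega),
    Finset.sum_insert (by simp only [Finset.mem_insert, Finset.mem_Icc]; omega),
    Finset.sum_insert (by simp only [Finset.mem_Icc]; omega)]
  ring

lemma part_one (σ : ℝ → ℝ) (β Ks Cs : ℝ) (m s : ℕ) (hσc : ContDiff ℝ m σ)
    (hsm : s ≤ m) (hβ : (0:ℝ) ≤ β) (hKs : 0 < Ks) (hCs : 0 < Cs)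
    (hbound : ∀ x : ℝ, Ks ≤ |x| → |iteratedDeriv s σ x| ≤ Cs * |x| ^ (-β - 1))
    (a b : ℤ) (hab : a < b) (δ : ℝ) (hδ : 0 < δ)
    (n : ℕ) (hn : 1 ≤ n) (hnδ : Ks + 1 ≤ (n : ℝ) * δ)
    (x : ℝ) (hx : x ∈ Set.Icc ((a : ℝ) + δ) ((b : ℝ) - δ)) :
    |∑ k ∈ Finset.Icc ((n : ℤ) * a) ((n : ℤ) * b),
        iteratedDeriv s (phiFn σ) ((n : ℝ) * x - (k : ℝ))|
      ≤ (Cs / 2) * (((n : ℝ) * δ + 1) ^ (-β - 1) + 2 * ((n : ℝ) * δ) ^ (-β - 1)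
          + ((n : ℝ) * δ - 1) ^ (-β - 1)) := by
  set u : ℝ := (n : ℝ) * x with hu
  set A : ℤ := (n : ℤ) * a with hA
  set B : ℤ := (n : ℤ) * b with hB
  have hn1 : (1:ℤ) ≤ (n:ℤ) := by exact_mod_cast hn
  have hAB : A + 1 ≤ B := by
    have h1 : (1:ℤ) * 1 ≤ (n:ℤ) * (b - a) :=
      mul_le_mul hn1 (by omega) (by omega) (by omega)
    simp only [hA, hB]; nlinarith [h1]
  set h : ℤ → ℝ := fun j => iteratedDeriv s σ (u - (j : ℝ)) with hh
  have key : ∑ k ∈ Finset.Icc A B, iteratedDeriv s (phiFn σ) (u - (k : ℝ))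
      = (h (A - 1) + h A - h B - h (B + 1)) / 2 := by
    have step : ∀ k ∈ Finset.Icc A B,
        iteratedDeriv s (phiFn σ) (u - (k : ℝ)) = (h (k - 1) - h (k + 1)) / 2 := by
      intro k _
      rw [iteratedDeriv_phiFn hσc hsm]
      have e1 : u - (k : ℝ) + 1 = u - ((k - 1 : ℤ) : ℝ) := by push_cast; ring
      have e2 : u - (k : ℝ) - 1 = u - ((k + 1 : ℤ) : ℝ) := by push_cast; ring
      rw [e1, e2]
    rw [Finset.sum_congr rfl step, ← Finset.sum_div, telescope_sum h A B hAB]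
  -- bounds
  have hxl : (a : ℝ) + δ ≤ x := hx.1
  have hxr : x ≤ (b : ℝ) - δ := hx.2
  have hn0 : (0:ℝ) ≤ (n : ℝ) := Nat.cast_nonneg n
  have hl : (n : ℝ) * (a : ℝ) + (n : ℝ) * δ ≤ u := by
    have := mul_le_mul_of_nonneg_left hxl hn0
    simp only [hu]; nlinarith [this]
  have hr : u ≤ (n : ℝ) * (b : ℝ) - (n : ℝ) * δ := by
    have := mul_le_mul_of_nonneg_left hxr hn0
    simp only [hu]; nlinarith [this]
  have hp : -β - 1 ≤ 0 := by linarith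
  have gen : ∀ j : ℤ, ∀ t : ℝ, Ks ≤ t → t ≤ |u - (j : ℝ)| → |h j| ≤ Cs * t ^ (-β - 1) := by
    intro j t h1t h2t
    have h0t : 0 < t := lt_of_lt_of_le hKs h1t
    refine (hbound (u - (j : ℝ)) (le_trans h1t h2t)).trans ?_
    exact mul_le_mul_of_nonneg_left (Real.rpow_le_rpow_of_nonpos h0t h2t hp) hCs.le
  have cA : ((A : ℤ) : ℝ) = (n : ℝ) * (a : ℝ) := by simp [hA]
  have cB : ((B : ℤ) : ℝ) = (n : ℝ) * (b : ℝ) := by simp [hB]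
  have c1 : |h (A - 1)| ≤ Cs * ((n : ℝ) * δ + 1) ^ (-β - 1) := by
    refine gen _ _ (by linarith) ?_
    have : (n : ℝ) * δ + 1 ≤ u - ((A - 1 : ℤ) : ℝ) := by push_cast [cA]; linarith
    exact this.trans (le_abs_self _)
  have c2 : |h A| ≤ Cs * ((n : ℝ) * δ) ^ (-β - 1) := by
    refine gen _ _ (by linarith) ?_
    have : (n : ℝ) * δ ≤ u - ((A : ℤ) : ℝ) := by rw [cA]; linarith
    exact this.trans (le_abs_self _)
  have c3 : |h B| ≤ Cs * ((n : ℝ) * δ) ^ (-β - 1) := by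
    refine gen _ _ (by linarith) ?_
    have : (n : ℝ) * δ ≤ -(u - ((B : ℤ) : ℝ)) := by rw [cB]; linarith
    exact this.trans (neg_le_abs _)
  have c4 : |h (B + 1)| ≤ Cs * ((n : ℝ) * δ + 1) ^ (-β - 1) := by
    refine gen _ _ (by linarith) ?_
    have : (n : ℝ) * δ + 1 ≤ -(u - ((B + 1 : ℤ) : ℝ)) := by push_cast [cB]; linarith
    exact this.trans (neg_le_abs _)
  have habs : |h (A - 1) + h A - h B - h (B + 1)|
      ≤ |h (A - 1)| + |h A| + |h B| + |h (B + 1)| := by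
    refine abs_le.mpr ⟨?_, ?_⟩
    · have := neg_abs_le (h (A - 1)); have := neg_abs_le (h A)
      have := le_abs_self (h B); have := le_abs_self (h (B + 1)); linarith
    · have := le_abs_self (h (A - 1)); have := le_abs_self (h A)
      have := neg_abs_le (h B); have := neg_abs_le (h (B + 1)); linarith
  have hpq : ((n : ℝ) * δ + 1) ^ (-β - 1) ≤ ((n : ℝ) * δ - 1) ^ (-β - 1) :=
    Real.rpow_le_rpow_of_nonpos (by linarith) (by linarith) hp
  rw [key, abs_div, abs_two]
  nlinarith [habs, c1, c2, c3, c4, mul_le_mul_of_nonneg_left hpq hCs.le]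


theorem trunc_moment_zero_deriv_estimate (σ : ℝ → ℝ) (α β : ℝ) (m : ℕ) (K C : ℕ → ℝ)
    (hσ : Sigmoidal σ) (hmono : Monotone σ) (h1 : Sigma1 σ) (h2 : Sigma2 σ) (h3 : Sigma3 σ α)
    (h4 : Sigma4 σ m β K C) (a b : ℤ) (hab : a < b)
    (δ : ℝ) (hδ : 0 < δ) (hδ2 : (a : ℝ) + δ < (b : ℝ) - δ)
    (s : ℕ) (hs1 : 1 ≤ s) (hsm : s ≤ m) :
    (∀ n : ℕ, 1 ≤ n → K s + 1 ≤ (n : ℝ) * δ →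
      ∀ x ∈ Set.Icc ((a : ℝ) + δ) ((b : ℝ) - δ),
        |∑ k ∈ Finset.Icc ((n : ℤ) * a) ((n : ℤ) * b),
            iteratedDeriv s (phiFn σ) ((n : ℝ) * x - (k : ℝ))|
          ≤ (C s / 2) * (((n : ℝ) * δ + 1) ^ (-β - 1) + 2 * ((n : ℝ) * δ) ^ (-β - 1)
              + ((n : ℝ) * δ - 1) ^ (-β - 1))) ∧
    (∃ D : ℝ, ∃ N : ℕ, ∀ n : ℕ, N ≤ n →
      ∀ x ∈ Set.Icc ((a : ℝ) + δ) ((b : ℝ) - δ),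
        |∑ k ∈ Finset.Icc ((n : ℤ) * a) ((n : ℤ) * b),
            iteratedDeriv s (phiFn σ) ((n : ℝ) * x - (k : ℝ))|
          ≤ D * (n : ℝ) ^ (-β - 1)) := by
  obtain ⟨hm2, hβm, hσc, hS⟩ := h4
  obtain ⟨hK, hC, hbd⟩ := hS s hs1 hsm
  have hm0 : (0:ℝ) ≤ (m:ℝ) := Nat.cast_nonneg m
  have hβ0 : (0:ℝ) ≤ β := by linarith
  constructor
  · intro n hn hnδ x hx
    exact part_one σ β (K s) (C s) m s hσc hsm hβ0 hK hC hbd a b hab δ hδ n hn hnδ x hx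
  · refine ⟨2 * C s * (δ / 2) ^ (-β - 1), max 1 ⌈(K s + 3) / δ⌉₊, ?_⟩
    intro n hn x hx
    have hn1 : 1 ≤ n := le_trans (le_max_left _ _) hn
    have hceil : ⌈(K s + 3) / δ⌉₊ ≤ n := le_trans (le_max_right _ _) hn
    have h1 : (K s + 3) / δ ≤ (n : ℝ) := by exact_mod_cast Nat.ceil_le.mp hceil
    have hδn : K s + 3 ≤ (n : ℝ) * δ := by
      rw [div_le_iff₀ hδ] at h1; linarith
    refine (part_one σ β (K s) (C s) m s hσc hsm hβ0 hK hC hbd a b hab δ hδ n hn1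
      (by linarith) x hx).trans ?_
    have hp : -β - 1 ≤ 0 := by linarith
    have h0 : (0:ℝ) < (n : ℝ) * δ / 2 := by linarith [hK]
    have b1 : ((n:ℝ)*δ+1)^(-β-1) ≤ ((n:ℝ)*δ/2)^(-β-1) :=
      Real.rpow_le_rpow_of_nonpos h0 (by linarith) hp
    have b2 : ((n:ℝ)*δ)^(-β-1) ≤ ((n:ℝ)*δ/2)^(-β-1) :=
      Real.rpow_le_rpow_of_nonpos h0 (by linarith) hp
    have b3 : ((n:ℝ)*δ-1)^(-β-1) ≤ ((n:ℝ)*δ/2)^(-β-1) :=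
      Real.rpow_le_rpow_of_nonpos h0 (by linarith) hp
    have e : ((n:ℝ)*δ/2)^(-β-1) = (n:ℝ)^(-β-1) * (δ/2)^(-β-1) := by
      rw [show (n:ℝ)*δ/2 = (n:ℝ)*(δ/2) by ring,
        Real.mul_rpow (Nat.cast_nonneg n) (by linarith)]
    rw [e] at b1 b2 b3
    have m1 := mul_le_mul_of_nonneg_left b1 hC.le
    have m2 := mul_le_mul_of_nonneg_left b2 hC.le
    have m3 := mul_le_mul_of_nonneg_left b3 hC.le
    linarith [m1, m2, m3]
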